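/- Let φ : [0,∞) → ℂ be locally integrable, δ > 0, and define Φ(δ, ν) = (1/δ)·∫_ν^{ν+δ} φ(u) du. Suppose there is a modulus of continuity w such that for all δ₁ > 0, (1/δ₁)·∫_0^{δ₁} |φ(t)| dt ≤ w(δ₁) and for all γ, δ₁ > 0, (1/δ₁)·∫_0^{δ₁} |φ(t) − φ(t+γ)| dt ≤ w(γ). Then |Φ(δ₁, δ₂)| ≤ w(δ₁) + w(δ₂) for all δ₁, δ₂ > 0. -/
import Mathlib

open MeasureTheory intervalIntegral

/-- Lemma (7): if (1/δ)∫_0^δ |φ| ≤ w(δ) and (1/δ)∫_0^δ |φ(t) − φ(t+γ)| dt ≤ w(γ),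
then |Φ(δ₁,δ₂)| ≤ w(δ₁) + w(δ₂), where Φ(δ,ν) = (1/δ)∫_ν^{ν+δ} φ. -/
theorem stmt_10 (φ : ℝ → ℂ) (hloc : MeasureTheory.LocallyIntegrable φ)
    (w : ℝ → ℝ) (hw0 : w 0 = 0)
    (hmono : ∀ x y : ℝ, 0 ≤ x → x ≤ y → w x ≤ w y)
    (hcont : ContinuousOn w (Set.Ici 0))
    (hsub : ∀ x y : ℝ, 0 ≤ x → 0 ≤ y → w (x + y) ≤ w x + w y)
    (h1 : ∀ δ : ℝ, 0 < δ → (1 / δ) * ∫ t in (0 : ℝ)..δ, ‖φ t‖ ≤ w δ)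
    (h2 : ∀ γ δ : ℝ, 0 < γ → 0 < δ →
      (1 / δ) * ∫ t in (0 : ℝ)..δ, ‖φ t - φ (t + γ)‖ ≤ w γ) :
    ∀ δ₁ δ₂ : ℝ, 0 < δ₁ → 0 < δ₂ →
      ‖(1 / δ₁ : ℝ) • ∫ u in δ₂..(δ₂ + δ₁), φ u‖ ≤ w δ₁ + w δ₂ := by
  intro δ₁ δ₂ hd1 hd2
  have hφ1 : IntervalIntegrable φ volume 0 δ₁ :=
    (hloc.integrableOn_isCompact isCompact_uIcc).intervalIntegrable
  have hφ2 : IntervalIntegrable φ volume δ₂ (δ₂ + δ₁) :=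
    (hloc.integrableOn_isCompact isCompact_uIcc).intervalIntegrable
  have hφ3 : IntervalIntegrable (fun t => φ (t + δ₂)) volume 0 δ₁ := by
    have := hφ2.comp_add_right δ₂
    simpa using this
  have key : (∫ u in δ₂..(δ₂ + δ₁), φ u) = ∫ t in (0:ℝ)..δ₁, φ (t + δ₂) := by
    rw [intervalIntegral.integral_comp_add_right]
    norm_num [add_comm]
  have split : (∫ t in (0:ℝ)..δ₁, φ (t + δ₂))
      = (∫ t in (0:ℝ)..δ₁, φ t) - ∫ t in (0:ℝ)..δ₁, (φ t - φ (t + δ₂)) := by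
    rw [intervalIntegral.integral_sub hφ1 hφ3]
    ring
  have hle : δ₁ ≤ δ₁ := le_refl _
  have hbound : ‖∫ t in (0:ℝ)..δ₁, φ (t + δ₂)‖
      ≤ (∫ t in (0:ℝ)..δ₁, ‖φ t‖) + ∫ t in (0:ℝ)..δ₁, ‖φ t - φ (t + δ₂)‖ := by
    rw [split]
    refine (norm_sub_le _ _).trans (add_le_add ?_ ?_)
    · exact intervalIntegral.norm_integral_le_integral_norm hd1.le
    · exact intervalIntegral.norm_integral_le_integral_norm hd1.le
  rw [key, norm_smul, Real.norm_eq_abs, abs_of_pos (by positivity : (0:ℝ) < 1/δ₁)]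
  have h1' := h1 δ₁ hd1
  have h2' := h2 δ₂ δ₁ hd2 hd1
  have hpos : (0:ℝ) < 1/δ₁ := by positivity
  nlinarith [mul_le_mul_of_nonneg_left hbound hpos.le]
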